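/- Let F be a free group of rank n ≥ 2 with free generating set X, let j be a positive integer, and let D be a distinct difference configuration contained in the sphere S_j(e). Then |D| ≤ 2n(2n−1)^{2j/3} + 2n²(2n−1)^{2j/3−2}. -/

import Mathlib

namespace DDCaux

open List

/-- A word is reduced: no adjacent cancelling pair. -/
def IsRed {α : Type*} (l : List (α × Bool)) : Prop :=
  List.Chain' (fun a b => ¬(a.1 = b.1 ∧ a.2 = !b.2)) l

instance {α : Type*} [DecidableEq α] : DecidablePred (IsRed (α := α)) := fun l => by
  unfold IsRed List.Chain'; infer_instance

variable {α : Type*} [DecidableEq α]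

lemma isRed_reduce (l : List (α × Bool)) : IsRed (FreeGroup.reduce l) := by
  induction l with
  | nil => simp [IsRed, List.Chain']
  | cons x l ih =>
    rw [FreeGroup.reduce.cons]
    rcases h : FreeGroup.reduce l with _ | ⟨hd, tl⟩
    · simp [IsRed, List.Chain']
    · rw [h] at ih
      show IsRed (if x.1 = hd.1 ∧ x.2 = !hd.2 then tl else x :: hd :: tl)
      by_cases hc : x.1 = hd.1 ∧ x.2 = !hd.2
      · rw [if_pos hc]; exact ih.tail
      · rw [if_neg hc]
        exact List.isChain_cons_cons.mpr ⟨hc, ih⟩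

lemma reduce_eq_self {l : List (α × Bool)} (h : IsRed l) : FreeGroup.reduce l = l := by
  induction l with
  | nil => rfl
  | cons x l ih =>
    have htl : FreeGroup.reduce l = l := ih h.tail
    rw [FreeGroup.reduce.cons, htl]
    rcases l with _ | ⟨hd, tl⟩
    · rfl
    · show (if x.1 = hd.1 ∧ x.2 = !hd.2 then tl else x :: hd :: tl) = x :: hd :: tl
      have hx : ¬(x.1 = hd.1 ∧ x.2 = !hd.2) := (List.isChain_cons_cons.mp h).1
      simp [hx]

lemma isRed_toWord (g : FreeGroup α) : IsRed g.toWord := by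
  rw [← FreeGroup.reduce_toWord]; exact isRed_reduce _

lemma mk_inj_of_isRed {l l' : List (α × Bool)} (h : IsRed l) (h' : IsRed l')
    (e : FreeGroup.mk l = FreeGroup.mk l') : l = l' := by
  have := FreeGroup.reduce.sound e
  rwa [reduce_eq_self h, reduce_eq_self h'] at this

/-- The finset of reduced words of length `k`. -/
def RW (α : Type*) [DecidableEq α] [Fintype α] (k : ℕ) : Finset (List (α × Bool)) :=
  ((Finset.univ : Finset (Fin k → α × Bool)).image List.ofFn).filter (fun l => IsRed l)

variable [Fintype α]

lemma mem_RW {k : ℕ} {l : List (α × Bool)} : l ∈ RW α k ↔ l.length = k ∧ IsRed l := by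
  simp only [RW, Finset.mem_filter, Finset.mem_image, Finset.mem_univ, true_and]
  constructor
  · rintro ⟨⟨f, rfl⟩, h⟩; simp [h]
  · rintro ⟨hl, h⟩
    refine ⟨⟨fun i => l.get (Fin.cast hl.symm i), ?_⟩, h⟩
    subst hl
    exact List.ofFn_get l


lemma RW_one_card : (RW α 1).card ≤ 2 * Fintype.card α := by
  have h1 : (RW α 1).card ≤ ((Finset.univ : Finset (Fin 1 → α × Bool)).image List.ofFn).card :=
    Finset.card_le_card (Finset.filter_subset _ _)
  have h2 : ((Finset.univ : Finset (Fin 1 → α × Bool)).image List.ofFn).card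
      ≤ Fintype.card (Fin 1 → α × Bool) := by
    simpa using Finset.card_image_le (s := (Finset.univ : Finset (Fin 1 → α × Bool)))
      (f := List.ofFn)
  have h3 : Fintype.card (Fin 1 → α × Bool) = 2 * Fintype.card α := by
    simp [Fintype.card_prod, mul_comm]
  omega

lemma RW_step [Nonempty α] (k : ℕ) :
    (RW α (k + 2)).card ≤ (2 * Fintype.card α - 1) * (RW α (k + 1)).card := by
  inhabit α
  have key : (RW α (k + 2)).card
      ≤ (2 * Fintype.card α - 1) * ((RW α (k + 2)).image List.tail).card := by
    apply Finset.card_le_mul_card_image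
    intro r _hr
    -- the fiber over r injects into univ.erase (r.head⁻¹)
    rcases h : r with _ | ⟨b, tl⟩
    ·
      -- (k+2)-list has length k+1 > 0, so no element maps to []
      subst h
      have : {l ∈ RW α (k + 2) | l.tail = []} = ∅ := by
        ext l
        simp only [Finset.mem_filter, Finset.notMem_empty, iff_false, not_and]
        intro hl htl
        have := (mem_RW.mp hl).1
        rcases l with _ | ⟨a, l⟩
        · simp at this
        · simp at htl
          subst htl
          simp at this
      rw [this]
      simp
    · subst h
      have hec : (Finset.univ.erase ((b.1, !b.2) : α × Bool)).card
          = 2 * Fintype.card α - 1 := by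
        rw [Finset.card_erase_of_mem (Finset.mem_univ _), Finset.card_univ]
        simp only [Fintype.card_prod, Fintype.card_bool]
        omega
      rw [← hec]
      apply Finset.card_le_card_of_injOn (f := fun l : List (α × Bool) => l.headI)
      · intro l hl
        simp only [Finset.coe_filter, Set.mem_setOf_eq] at hl
        obtain ⟨hl1, hl2⟩ := hl
        obtain ⟨hlen, hred⟩ := mem_RW.mp hl1
        rcases l with _ | ⟨a, l⟩
        · simp at hlen
        · simp only [List.tail_cons] at hl2
          subst hl2
          have := (List.isChain_cons_cons.mp hred).1
          simp only [List.headI]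
          apply Finset.mem_erase.mpr
          refine ⟨?_, Finset.mem_univ _⟩
          intro hcon
          apply this
          rw [hcon]
          exact ⟨rfl, rfl⟩
      · intro l1 hl1 l2 hl2 hh
        simp only [Finset.coe_filter, Set.mem_setOf_eq] at hl1 hl2
        obtain ⟨hm1, ht1⟩ := hl1
        obtain ⟨hm2, ht2⟩ := hl2
        have hlen1 := (mem_RW.mp hm1).1
        have hlen2 := (mem_RW.mp hm2).1
        rcases l1 with _ | ⟨a1, l1⟩; · simp at hlen1
        rcases l2 with _ | ⟨a2, l2⟩; · simp at hlen2
        simp only [List.tail_cons] at ht1 ht2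
        simp only [List.headI] at hh
        rw [hh, ht1, ht2]
  have himg : (RW α (k + 2)).image List.tail ⊆ RW α (k + 1) := by
    intro r hr
    obtain ⟨l, hl, rfl⟩ := Finset.mem_image.mp hr
    obtain ⟨hlen, hred⟩ := mem_RW.mp hl
    refine mem_RW.mpr ⟨by simp [hlen], ?_⟩
    rcases l with _ | ⟨a, l⟩
    · simp at hlen
    · exact hred.tail
  calc (RW α (k + 2)).card ≤ (2 * Fintype.card α - 1) * ((RW α (k + 2)).image List.tail).card :=
        key
    _ ≤ (2 * Fintype.card α - 1) * (RW α (k + 1)).card := by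
        exact Nat.mul_le_mul_left _ (Finset.card_le_card himg)

lemma RW_card_le [Nonempty α] {k : ℕ} (hk : 1 ≤ k) :
    (RW α k).card ≤ 2 * Fintype.card α * (2 * Fintype.card α - 1) ^ (k - 1) := by
  obtain ⟨m, rfl⟩ : ∃ m, k = m + 1 := ⟨k - 1, by omega⟩
  clear hk
  induction m with
  | zero => simpa using RW_one_card (α := α)
  | succ m ih =>
    have h1 := RW_step (α := α) m
    calc (RW α (m + 2)).card ≤ (2 * Fintype.card α - 1) * (RW α (m + 1)).card := h1
      _ ≤ (2 * Fintype.card α - 1) *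
          (2 * Fintype.card α * (2 * Fintype.card α - 1) ^ (m + 1 - 1)) :=
        Nat.mul_le_mul_left _ ih
      _ = 2 * Fintype.card α * (2 * Fintype.card α - 1) ^ (m + 2 - 1) := by
        simp only [show m + 1 - 1 = m from rfl, show m + 2 - 1 = m + 1 from rfl]
        ring

/-- Sum of cards of pairwise almost-disjoint finsets. -/
lemma sum_card_le {ι β : Type*} [DecidableEq ι] [DecidableEq β] (P : Finset ι)
    (A : ι → Finset β)
    (h : ∀ x ∈ P, ∀ y ∈ P, x ≠ y → (A x ∩ A y).card ≤ 1) :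
    ∑ x ∈ P, (A x).card ≤ (P.biUnion A).card + P.card.choose 2 := by
  induction P using Finset.induction_on with
  | empty => simp
  | @insert a P ha ih =>
    have hP : ∀ x ∈ P, ∀ y ∈ P, x ≠ y → (A x ∩ A y).card ≤ 1 := fun x hx y hy =>
      h x (Finset.mem_insert_of_mem hx) y (Finset.mem_insert_of_mem hy)
    have ih' := ih hP
    rw [Finset.sum_insert ha, Finset.biUnion_insert, Finset.card_insert_of_notMem ha]
    have hint : (A a ∩ P.biUnion A).card ≤ P.card := by
      rw [Finset.inter_biUnion]
      calc (P.biUnion fun x => A a ∩ A x).card ≤ ∑ x ∈ P, (A a ∩ A x).card :=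
            Finset.card_biUnion_le
        _ ≤ ∑ _x ∈ P, 1 := Finset.sum_le_sum (fun x hx =>
            h a (Finset.mem_insert_self a P) x (Finset.mem_insert_of_mem hx)
              (fun e => ha (e ▸ hx)))
        _ = P.card := by simp
    have hunion := Finset.card_union_add_card_inter (A a) (P.biUnion A)
    have hch : (P.card + 1).choose 2 = P.card.choose 2 + P.card := by
      rw [show (2:ℕ) = Nat.succ 1 from rfl, Nat.choose_succ_succ, Nat.choose_one_right,
        Nat.add_comm]
    omega

end DDCaux


/-- A subset `D` of a group is a distinct difference configuration. -/
def IsDDC {G : Type*} [Group G] (D : Set G) : Prop :=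
  ∀ g ∈ D, ∀ h ∈ D, ∀ g' ∈ D, ∀ h' ∈ D,
    g ≠ h → g' ≠ h' → g⁻¹ * h = g'⁻¹ * h' → g = g' ∧ h = h'

theorem stmt13 (α : Type*) [Fintype α] [DecidableEq α] (n : ℕ) (hn : 2 ≤ n)
    (hcard : Fintype.card α = n) (j : ℕ) (hj : 0 < j)
    (D : Set (FreeGroup α)) (hD : D ⊆ {g : FreeGroup α | g.norm = j})
    (hDDC : IsDDC D) :
    (D.ncard : ℝ) ≤ 2 * n * (2 * n - 1 : ℝ) ^ ((2 * (j : ℝ)) / 3) +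
      2 * n ^ 2 * (2 * n - 1 : ℝ) ^ ((2 * (j : ℝ)) / 3 - 2) := by
  classical
  haveI : Nonempty α := Fintype.card_pos_iff.mp (by omega)
  have hDsub : D ⊆ FreeGroup.toWord ⁻¹' ↑(DDCaux.RW α j) := by
    intro g hg
    have hg' : g.norm = j := hD hg
    simp only [Set.mem_preimage, Finset.mem_coe]
    exact DDCaux.mem_RW.mpr ⟨hg', DDCaux.isRed_toWord g⟩
  have hDfin : D.Finite :=
    Set.Finite.subset (Set.Finite.preimage FreeGroup.toWord_injective.injOn
      (DDCaux.RW α j).finite_toSet) hDsub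
  set DF : Finset (FreeGroup α) := hDfin.toFinset with hDF
  have hncard : D.ncard = DF.card := Set.ncard_eq_toFinset_card D hDfin
  set W : Finset (List (α × Bool)) := DF.image FreeGroup.toWord with hWdef
  have hWcard : W.card = DF.card := Finset.card_image_of_injective _ FreeGroup.toWord_injective
  have hWmem : ∀ w ∈ W, w.length = j ∧ DDCaux.IsRed w ∧ FreeGroup.mk w ∈ D := by
    intro w hw
    obtain ⟨g, hg, rfl⟩ := Finset.mem_image.mp hw
    have hgD : g ∈ D := hDfin.mem_toFinset.mp hg
    refine ⟨hD hgD, DDCaux.isRed_toWord g, ?_⟩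
    rw [FreeGroup.mk_toWord]; exact hgD
  set t := j / 3 with ht
  set P : Finset (List (α × Bool)) := W.image (List.take t) with hP
  set A : List (α × Bool) → Finset (List (α × Bool)) :=
    fun p => (W.filter (fun w => w.take t = p)).image (List.drop t) with hA
  have hfib : ∀ p, (W.filter (fun w => w.take t = p)).card = (A p).card := by
    intro p
    refine (Finset.card_image_of_injOn ?_).symm
    intro w1 h1 w2 h2 hdrop
    simp only [Finset.coe_filter, Set.mem_setOf_eq] at h1 h2
    have h3 : w1.take t ++ w1.drop t = w2.take t ++ w2.drop t := by rw [h1.2, h2.2, hdrop]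
    simpa [List.take_append_drop] using h3
  have hsum : W.card = ∑ p ∈ P, (A p).card := by
    rw [hP, Finset.card_eq_sum_card_image (List.take t) W]
    exact Finset.sum_congr rfl (fun p _ => hfib p)
  have hApmem : ∀ p s, s ∈ A p → p ++ s ∈ W := by
    intro p s hs
    obtain ⟨w, hw, rfl⟩ := Finset.mem_image.mp hs
    obtain ⟨hwW, hwt⟩ := Finset.mem_filter.mp hw
    rwa [← hwt, List.take_append_drop]
  have hmkD : ∀ w ∈ W, FreeGroup.mk w ∈ D := fun w hw => (hWmem w hw).2.2
  have hmkinj : ∀ w ∈ W, ∀ w' ∈ W, FreeGroup.mk w = FreeGroup.mk w' → w = w' :=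
    fun w hw w' hw' e => DDCaux.mk_inj_of_isRed (hWmem w hw).2.1 (hWmem w' hw').2.1 e
  have hpair : ∀ p ∈ P, ∀ p' ∈ P, p ≠ p' → (A p ∩ A p').card ≤ 1 := by
    intro p _ p' _ hne
    apply Finset.card_le_one.mpr
    intro s hs s' hs'
    by_contra hss
    obtain ⟨hs1, hs2⟩ := Finset.mem_inter.mp hs
    obtain ⟨hs1', hs2'⟩ := Finset.mem_inter.mp hs'
    have w1 := hApmem p s hs1
    have w2 := hApmem p s' hs1'
    have w3 := hApmem p' s hs2
    have w4 := hApmem p' s' hs2'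
    have hgh : FreeGroup.mk (p ++ s) ≠ FreeGroup.mk (p ++ s') := by
      intro e
      exact hss (List.append_cancel_left (hmkinj _ w1 _ w2 e))
    have hgh' : FreeGroup.mk (p' ++ s) ≠ FreeGroup.mk (p' ++ s') := by
      intro e
      exact hss (List.append_cancel_left (hmkinj _ w3 _ w4 e))
    have hdiff : (FreeGroup.mk (p ++ s))⁻¹ * FreeGroup.mk (p ++ s')
        = (FreeGroup.mk (p' ++ s))⁻¹ * FreeGroup.mk (p' ++ s') := by
      rw [← FreeGroup.mul_mk, ← FreeGroup.mul_mk, ← FreeGroup.mul_mk, ← FreeGroup.mul_mk]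
      group
    have hcon := hDDC _ (hmkD _ w1) _ (hmkD _ w2) _ (hmkD _ w3) _ (hmkD _ w4) hgh hgh' hdiff
    exact hne (List.append_cancel_right (hmkinj _ w1 _ w3 hcon.1))
  have hAsub : ∀ p ∈ P, A p ⊆ DDCaux.RW α (j - t) := by
    intro p _ s hs
    obtain ⟨w, hw, rfl⟩ := Finset.mem_image.mp hs
    have hwW := (Finset.mem_filter.mp hw).1
    refine DDCaux.mem_RW.mpr ⟨?_, ((hWmem _ hwW).2.1).drop t⟩
    rw [List.length_drop, (hWmem _ hwW).1]
  have hPsub : P ⊆ DDCaux.RW α t := by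
    intro p hp
    obtain ⟨w, hw, rfl⟩ := Finset.mem_image.mp hp
    refine DDCaux.mem_RW.mpr ⟨?_, ((hWmem _ hw).2.1).take t⟩
    rw [List.length_take, (hWmem _ hw).1]
    omega
  have hmain : W.card ≤ (DDCaux.RW α (j - t)).card + P.card.choose 2 := by
    rw [hsum]
    calc ∑ p ∈ P, (A p).card ≤ (P.biUnion A).card + P.card.choose 2 :=
        DDCaux.sum_card_le P A hpair
      _ ≤ _ := by
        have h5 : P.biUnion A ⊆ DDCaux.RW α (j - t) := Finset.biUnion_subset.mpr hAsub
        exact Nat.add_le_add_right (Finset.card_le_card h5) _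
  -- numeric bounds
  have hjt1 : 1 ≤ j - t := by omega
  have hU : (DDCaux.RW α (j - t)).card ≤ 2 * n * (2 * n - 1) ^ (j - t - 1) := by
    have h6 := DDCaux.RW_card_le (α := α) hjt1
    rwa [hcard] at h6
  -- real number setup
  set c : ℝ := 2 * n - 1 with hcdef
  have hc1 : (1 : ℝ) ≤ c := by
    rw [hcdef]
    have : (2 : ℝ) ≤ n := by exact_mod_cast hn
    linarith
  have hc0 : (0 : ℝ) ≤ c := le_trans zero_le_one hc1
  have hcastc : ((2 * n - 1 : ℕ) : ℝ) = c := by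
    rw [hcdef]
    have h7 : (1 : ℕ) ≤ 2 * n := by omega
    push_cast [Nat.cast_sub h7]
    ring
  have hrpow : ∀ (k : ℕ) (e : ℝ), (k : ℝ) ≤ e → (c : ℝ) ^ (k : ℕ) ≤ c ^ e := by
    intro k e hke
    calc (c : ℝ) ^ (k : ℕ) = c ^ ((k : ℕ) : ℝ) := (Real.rpow_natCast c k).symm
      _ ≤ c ^ e := Real.rpow_le_rpow_of_exponent_le hc1 hke
  -- first exponent
  have hexp1 : ((j - t - 1 : ℕ) : ℝ) ≤ 2 * (j : ℝ) / 3 := by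
    have h8 : 3 * (j - t - 1) ≤ 2 * j := by omega
    have h9 : (3 : ℝ) * ((j - t - 1 : ℕ) : ℝ) ≤ 2 * (j : ℝ) := by exact_mod_cast h8
    linarith
  have hterm1 : ((2 * n * (2 * n - 1) ^ (j - t - 1) : ℕ) : ℝ)
      ≤ 2 * n * (2 * n - 1 : ℝ) ^ ((2 * (j : ℝ)) / 3) := by
    push_cast [hcastc]
    have h10 := hrpow (j - t - 1) (2 * (j : ℝ) / 3) hexp1
    have hn0 : (0 : ℝ) ≤ 2 * (n : ℝ) := by positivity
    calc 2 * (n : ℝ) * c ^ (j - t - 1) ≤ 2 * n * c ^ (2 * (j : ℝ) / 3) := by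
          exact mul_le_mul_of_nonneg_left h10 hn0
      _ = 2 * n * (2 * n - 1 : ℝ) ^ ((2 * (j : ℝ)) / 3) := by rw [hcdef]
  -- second term
  have hterm2 : ((P.card.choose 2 : ℕ) : ℝ)
      ≤ 2 * n ^ 2 * (2 * n - 1 : ℝ) ^ ((2 * (j : ℝ)) / 3 - 2) := by
    rcases Nat.eq_zero_or_pos t with h0 | h1
    · -- t = 0 : P has at most one element
      have hPone : P.card ≤ 1 := by
        have : P ⊆ {[]} := by
          intro p hp
          obtain ⟨w, _, rfl⟩ := Finset.mem_image.mp hp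
          simp [h0]
        simpa using Finset.card_le_card this
      have : P.card.choose 2 = 0 := Nat.choose_eq_zero_of_lt (by omega)
      rw [this]
      have : (0:ℝ) ≤ 2 * n ^ 2 * (2 * n - 1 : ℝ) ^ ((2 * (j : ℝ)) / 3 - 2) := by
        apply mul_nonneg (by positivity)
        rw [show (2 * (n:ℝ) - 1) = c from hcdef.symm]
        exact Real.rpow_nonneg hc0 _
      simpa using this
    · -- t ≥ 1
      have hm : P.card ≤ 2 * n * (2 * n - 1) ^ (t - 1) := by
        have h11 := DDCaux.RW_card_le (α := α) h1
        rw [hcard] at h11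
        exact le_trans (Finset.card_le_card hPsub) h11
      have hch2 : P.card.choose 2 * 2 ≤ P.card * P.card := by
        rw [Nat.choose_two_right]
        calc P.card * (P.card - 1) / 2 * 2 ≤ P.card * (P.card - 1) :=
            Nat.div_mul_le_self _ _
          _ ≤ P.card * P.card := Nat.mul_le_mul_left _ (by omega)
      have hmR : (P.card : ℝ) ≤ 2 * n * c ^ (t - 1) := by
        calc (P.card : ℝ) ≤ ((2 * n * (2 * n - 1) ^ (t - 1) : ℕ) : ℝ) := by exact_mod_cast hm
          _ = 2 * n * c ^ (t - 1) := by push_cast [hcastc]; ring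
      have hm0 : (0 : ℝ) ≤ (P.card : ℝ) := Nat.cast_nonneg _
      have hsq : (P.card : ℝ) * P.card ≤ (2 * n * c ^ (t - 1)) * (2 * n * c ^ (t - 1)) :=
        mul_le_mul hmR hmR hm0 (le_trans hm0 hmR)
      have hchR : ((P.card.choose 2 : ℕ) : ℝ) ≤ 2 * n ^ 2 * c ^ (2 * (t - 1)) := by
        have h12 : ((P.card.choose 2 : ℕ) : ℝ) * 2 ≤ (P.card : ℝ) * P.card := by
          exact_mod_cast hch2
        have h13 : (2 * n * c ^ (t - 1)) * (2 * n * c ^ (t - 1))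
            = 2 * (2 * n ^ 2 * c ^ (2 * (t - 1))) := by
          rw [two_mul (t - 1), pow_add]
          ring
        nlinarith [hsq]
      have hexp2 : ((2 * (t - 1) : ℕ) : ℝ) ≤ 2 * (j : ℝ) / 3 - 2 := by
        have h14 : 3 * (2 * (t - 1)) + 6 ≤ 2 * j := by omega
        have h15 : (3 : ℝ) * ((2 * (t - 1) : ℕ) : ℝ) + 6 ≤ 2 * (j : ℝ) := by
          exact_mod_cast h14
        linarith
      calc ((P.card.choose 2 : ℕ) : ℝ) ≤ 2 * n ^ 2 * c ^ (2 * (t - 1)) := hchR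
        _ ≤ 2 * n ^ 2 * c ^ (2 * (j : ℝ) / 3 - 2) := by
            exact mul_le_mul_of_nonneg_left (hrpow _ _ hexp2) (by positivity)
        _ = 2 * n ^ 2 * (2 * n - 1 : ℝ) ^ ((2 * (j : ℝ)) / 3 - 2) := by rw [hcdef]
  -- put everything together
  have hfinal : (W.card : ℝ) ≤ 2 * n * (2 * n - 1 : ℝ) ^ ((2 * (j : ℝ)) / 3) +
      2 * n ^ 2 * (2 * n - 1 : ℝ) ^ ((2 * (j : ℝ)) / 3 - 2) := by
    have h16 : (W.card : ℝ) ≤ ((2 * n * (2 * n - 1) ^ (j - t - 1) : ℕ) : ℝ)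
        + ((P.card.choose 2 : ℕ) : ℝ) := by
      have h17 : W.card ≤ 2 * n * (2 * n - 1) ^ (j - t - 1) + P.card.choose 2 := by omega
      exact_mod_cast h17
    linarith [hterm1, hterm2]
  rw [hncard, ← hWcard]
  exact hfinal
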